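/- For every n ≥ 1, the matrix Γ_n is nonsingular and Γ_n^{−T} Γ_n is similar to the Jordan block J_n((−1)^{n+1}). -/

import Mathlib

open Matrix

/-- The `n × n` upper-triangular Jordan block with eigenvalue `lam`. -/
def jordanBlock (n : ℕ) (lam : ℂ) : Matrix (Fin n) (Fin n) ℂ :=
  Matrix.of fun i j =>
    if i = j then lam else if (i : ℕ) + 1 = (j : ℕ) then 1 else 0

/-- The `n × n` matrix `Γ_n`: in 1-based indexing, its `(i, j)` entry is
`(-1)^(j+1)` if `i + j = n + 1`, `(-1)^j` if `i + j = n + 2`, and `0` otherwise. -/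
def Gamma (n : ℕ) : Matrix (Fin n) (Fin n) ℂ :=
  Matrix.of fun i j =>
    if (i : ℕ) + (j : ℕ) = n - 1 then (-1 : ℂ) ^ (j : ℕ)
    else if (i : ℕ) + (j : ℕ) = n then (-1 : ℂ) ^ ((j : ℕ) + 1) else 0

namespace GammaAux

noncomputable section

/-- the eigenvalue `(-1)^(n+1)` -/
def lam (n : ℕ) : ℂ := (-1) ^ (n + 1)

lemma lam_ne_zero (n : ℕ) : lam n ≠ 0 := by
  simp [lam]

lemma neg_one_pow_mul (a b : ℕ) : (-1 : ℂ) ^ a * (-1 : ℂ) ^ b = (-1 : ℂ) ^ (a + b) :=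
  (pow_add _ a b).symm

lemma neg_one_pow_congr {a b : ℕ} (h : a % 2 = b % 2) : (-1 : ℂ) ^ a = (-1 : ℂ) ^ b := by
  conv_lhs => rw [← Nat.div_add_mod a 2]
  conv_rhs => rw [← Nat.div_add_mod b 2]
  rw [pow_add, pow_add, pow_mul, pow_mul, h]
  norm_num

/-- the explicit inverse of `Gamma n` -/
def Cmat (n : ℕ) : Matrix (Fin n) (Fin n) ℂ :=
  Matrix.of fun i j => if (i : ℕ) + (j : ℕ) ≤ n - 1 then (-1 : ℂ) ^ (i : ℕ) else 0

/-- the cosquare `Γ⁻ᵀ Γ` -/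
def Mmat (n : ℕ) : Matrix (Fin n) (Fin n) ℂ :=
  Matrix.of fun i j =>
    if (i : ℕ) = (j : ℕ) then lam n else if (i : ℕ) < (j : ℕ) then 2 * lam n else 0

/-- entries of the similarity transform -/
def Pent (n i j : ℕ) : ℂ :=
  if i ≤ j then (2 * lam n) ^ (n - 1 - j) * (-1) ^ (j - i) * (j.choose i) else 0

def Pmat (n : ℕ) : Matrix (Fin n) (Fin n) ℂ :=
  Matrix.of fun i j => Pent n (i : ℕ) (j : ℕ)

/-- entries of `Pmat n * jordanBlock n (lam n)` -/
def Qmat (n : ℕ) : Matrix (Fin n) (Fin n) ℂ :=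
  Matrix.of fun i j =>
    lam n * Pent n (i : ℕ) (j : ℕ) +
      if 1 ≤ (j : ℕ) then Pent n (i : ℕ) ((j : ℕ) - 1) else 0

/-- the nilpotent shift -/
def Nmat (n : ℕ) : Matrix (Fin n) (Fin n) ℂ :=
  Matrix.of fun i j => if (i : ℕ) + 1 = (j : ℕ) then 1 else 0

lemma sum_delta {n : ℕ} (c : ℕ) (f : Fin n → ℂ)
    (hf : ∀ k : Fin n, (k : ℕ) ≠ c → f k = 0) :
    ∑ k : Fin n, f k = if h : c < n then f ⟨c, h⟩ else 0 := by
  split_ifs with h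
  · rw [← Finset.sum_subset (Finset.subset_univ {(⟨c, h⟩ : Fin n)})
      (fun k _ hk => hf k (by simpa [Fin.ext_iff] using hk))]
    simp
  · exact Finset.sum_eq_zero fun k _ => hf k (by have := k.isLt; omega)

lemma sum_delta2 {n : ℕ} (c₁ c₂ : ℕ) (hne : c₁ ≠ c₂) (f : Fin n → ℂ)
    (hf : ∀ k : Fin n, (k : ℕ) ≠ c₁ → (k : ℕ) ≠ c₂ → f k = 0) :
    ∑ k : Fin n, f k =
      (if h : c₁ < n then f ⟨c₁, h⟩ else 0) + (if h : c₂ < n then f ⟨c₂, h⟩ else 0) := by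
  have h1 : ∀ k : Fin n, f k
      = (if (k : ℕ) = c₁ then f k else 0) + (if (k : ℕ) = c₂ then f k else 0) := by
    intro k
    by_cases e1 : (k : ℕ) = c₁
    · simp [e1, hne]
    · by_cases e2 : (k : ℕ) = c₂
      · simp [e1, e2, Ne.symm hne]
      · simp [e1, e2, hf k e1 e2]
  rw [Finset.sum_congr rfl fun k _ => h1 k, Finset.sum_add_distrib,
    sum_delta c₁ _ (fun k hk => by simp [hk]),
    sum_delta c₂ _ (fun k hk => by simp [hk])]
  simp

lemma gamma_mul_C (n : ℕ) (hn : 1 ≤ n) : Gamma n * Cmat n = 1 := by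
  ext i j
  have hi := i.isLt; have hj := j.isLt
  rw [Matrix.mul_apply]
  rw [sum_delta2 (n - 1 - (i : ℕ)) (n - (i : ℕ)) (by omega) _
      (fun k hk1 hk2 => by
        have hk := k.isLt
        simp only [Gamma, Cmat, Matrix.of_apply]
        rw [if_neg (by omega), if_neg (by omega), zero_mul])]
  have hone : (1 : Matrix (Fin n) (Fin n) ℂ) i j
      = if (i : ℕ) = (j : ℕ) then 1 else 0 := by
    simp [Matrix.one_apply, Fin.ext_iff]
  rw [hone, dif_pos (show n - 1 - (i : ℕ) < n by omega)]
  simp only [Gamma, Cmat, Matrix.of_apply, Fin.val_mk]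
  rw [if_pos (show (i : ℕ) + (n - 1 - (i : ℕ)) = n - 1 by omega)]
  by_cases h1i : 1 ≤ (i : ℕ)
  · rw [dif_pos (show n - (i : ℕ) < n by omega),
      if_neg (show ¬((i : ℕ) + (n - (i : ℕ)) = n - 1) by omega),
      if_pos (show (i : ℕ) + (n - (i : ℕ)) = n by omega)]
    by_cases hij : (j : ℕ) ≤ (i : ℕ)
    · rw [if_pos (show (n - 1 - (i : ℕ)) + (j : ℕ) ≤ n - 1 by omega)]
      by_cases hij2 : (j : ℕ) + 1 ≤ (i : ℕ)
      · rw [if_pos (show (n - (i : ℕ)) + (j : ℕ) ≤ n - 1 by omega),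
          if_neg (show ¬((i : ℕ) = (j : ℕ)) by omega),
          neg_one_pow_mul, neg_one_pow_mul,
          neg_one_pow_congr (show ((n - 1 - (i:ℕ)) + (n - 1 - (i:ℕ))) % 2 = 0 % 2 by omega),
          neg_one_pow_congr (show ((n - (i:ℕ)) + 1 + (n - (i:ℕ))) % 2 = 1 % 2 by omega)]
        norm_num
      · rw [if_neg (show ¬((n - (i : ℕ)) + (j : ℕ) ≤ n - 1) by omega),
          if_pos (show (i : ℕ) = (j : ℕ) by omega), mul_zero, add_zero,
          neg_one_pow_mul,
          neg_one_pow_congr (show ((n - 1 - (i:ℕ)) + (n - 1 - (i:ℕ))) % 2 = 0 % 2 by omega)]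
        norm_num
    · rw [if_neg (show ¬((n - 1 - (i : ℕ)) + (j : ℕ) ≤ n - 1) by omega),
        if_neg (show ¬((n - (i : ℕ)) + (j : ℕ) ≤ n - 1) by omega),
        if_neg (show ¬((i : ℕ) = (j : ℕ)) by omega), mul_zero, mul_zero, add_zero]
  · rw [dif_neg (show ¬(n - (i : ℕ) < n) by omega), add_zero]
    by_cases hij : (j : ℕ) ≤ (i : ℕ)
    · rw [if_pos (show (n - 1 - (i : ℕ)) + (j : ℕ) ≤ n - 1 by omega),
        if_pos (show (i : ℕ) = (j : ℕ) by omega),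
        neg_one_pow_mul,
        neg_one_pow_congr (show ((n - 1 - (i:ℕ)) + (n - 1 - (i:ℕ))) % 2 = 0 % 2 by omega)]
      norm_num
    · rw [if_neg (show ¬((n - 1 - (i : ℕ)) + (j : ℕ) ≤ n - 1) by omega),
        if_neg (show ¬((i : ℕ) = (j : ℕ)) by omega), mul_zero]

lemma CT_mul_gamma (n : ℕ) (hn : 1 ≤ n) : (Cmat n)ᵀ * Gamma n = Mmat n := by
  ext i j
  have hi := i.isLt; have hj := j.isLt
  rw [Matrix.mul_apply]
  simp only [Matrix.transpose_apply]
  rw [sum_delta2 (n - 1 - (j : ℕ)) (n - (j : ℕ)) (by omega) _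
      (fun k hk1 hk2 => by
        have hk := k.isLt
        simp only [Gamma, Cmat, Matrix.of_apply]
        rw [if_neg (show ¬((k : ℕ) + (j : ℕ) = n - 1) by omega),
          if_neg (show ¬((k : ℕ) + (j : ℕ) = n) by omega), mul_zero])]
  rw [dif_pos (show n - 1 - (j : ℕ) < n by omega)]
  simp only [Gamma, Cmat, Mmat, Matrix.of_apply, Fin.val_mk, lam]
  rw [if_pos (show (n - 1 - (j : ℕ)) + (j : ℕ) = n - 1 by omega)]
  by_cases h1j : 1 ≤ (j : ℕ)
  · rw [dif_pos (show n - (j : ℕ) < n by omega),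
      if_neg (show ¬((n - (j : ℕ)) + (j : ℕ) = n - 1) by omega),
      if_pos (show (n - (j : ℕ)) + (j : ℕ) = n by omega)]
    rcases lt_trichotomy (i : ℕ) (j : ℕ) with hij | hij | hij
    · rw [if_pos (show (n - 1 - (j : ℕ)) + (i : ℕ) ≤ n - 1 by omega),
        if_pos (show (n - (j : ℕ)) + (i : ℕ) ≤ n - 1 by omega),
        if_neg (show ¬((i : ℕ) = (j : ℕ)) by omega), if_pos hij,
        neg_one_pow_mul, neg_one_pow_mul,
        neg_one_pow_congr (show ((n - 1 - (j:ℕ)) + (j:ℕ)) % 2 = (n + 1) % 2 by omega),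
        neg_one_pow_congr (show ((n - (j:ℕ)) + ((j:ℕ) + 1)) % 2 = (n + 1) % 2 by omega)]
      ring
    · rw [if_pos (show (n - 1 - (j : ℕ)) + (i : ℕ) ≤ n - 1 by omega),
        if_neg (show ¬((n - (j : ℕ)) + (i : ℕ) ≤ n - 1) by omega),
        if_pos (show (i : ℕ) = (j : ℕ) from hij), zero_mul, add_zero,
        neg_one_pow_mul]
      exact neg_one_pow_congr (by omega)
    · rw [if_neg (show ¬((n - 1 - (j : ℕ)) + (i : ℕ) ≤ n - 1) by omega),
        if_neg (show ¬((n - (j : ℕ)) + (i : ℕ) ≤ n - 1) by omega),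
        if_neg (show ¬((i : ℕ) = (j : ℕ)) by omega),
        if_neg (show ¬((i : ℕ) < (j : ℕ)) by omega), zero_mul, zero_mul, add_zero]
  · rw [dif_neg (show ¬(n - (j : ℕ) < n) by omega), add_zero]
    by_cases hij : (i : ℕ) ≤ (j : ℕ)
    · rw [if_pos (show (n - 1 - (j : ℕ)) + (i : ℕ) ≤ n - 1 by omega),
        if_pos (show (i : ℕ) = (j : ℕ) by omega), neg_one_pow_mul]
      exact neg_one_pow_congr (by omega)
    · rw [if_neg (show ¬((n - 1 - (j : ℕ)) + (i : ℕ) ≤ n - 1) by omega),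
        if_neg (show ¬((i : ℕ) = (j : ℕ)) by omega),
        if_neg (show ¬((i : ℕ) < (j : ℕ)) by omega), zero_mul]

lemma N_mul_apply {n : ℕ} (X : Matrix (Fin n) (Fin n) ℂ) (i j : Fin n) :
    (Nmat n * X) i j = if h : (i : ℕ) + 1 < n then X ⟨(i : ℕ) + 1, h⟩ j else 0 := by
  rw [Matrix.mul_apply]
  rw [sum_delta ((i : ℕ) + 1) _
      (fun k hk => by
        simp only [Nmat, Matrix.of_apply]
        rw [if_neg (fun h => hk h.symm), zero_mul])]
  split_ifs with h
  · simp [Nmat]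
  · rfl

lemma jordan_apply {n : ℕ} (l : ℂ) (i j : Fin n) :
    jordanBlock n l i j
      = if (i : ℕ) = (j : ℕ) then l else if (i : ℕ) + 1 = (j : ℕ) then 1 else 0 := by
  simp [jordanBlock, Fin.ext_iff]

lemma P_mul_J (n : ℕ) : Pmat n * jordanBlock n (lam n) = Qmat n := by
  ext i j
  have hi := i.isLt; have hj := j.isLt
  rw [Matrix.mul_apply]
  by_cases hj1 : 1 ≤ (j : ℕ)
  · rw [sum_delta2 ((j : ℕ)) ((j : ℕ) - 1) (by omega) _
      (fun k hk1 hk2 => by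
        rw [jordan_apply, if_neg hk1, if_neg (by omega), mul_zero])]
    rw [dif_pos (show (j : ℕ) < n from hj), dif_pos (show (j : ℕ) - 1 < n by omega)]
    simp only [jordan_apply, Qmat, Pmat, Matrix.of_apply, Fin.val_mk, if_true]
    rw [if_neg (show ¬((j : ℕ) - 1 = (j : ℕ)) by omega),
      if_pos (show (j : ℕ) - 1 + 1 = (j : ℕ) by omega),
      if_pos hj1]
    ring
  · rw [sum_delta ((j : ℕ)) _
      (fun k hk => by
        rw [jordan_apply, if_neg hk, if_neg (by omega), mul_zero])]
    rw [dif_pos (show (j : ℕ) < n from hj)]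
    simp only [jordan_apply, Qmat, Pmat, Matrix.of_apply, Fin.val_mk, if_true]
    rw [if_neg hj1]
    ring

lemma key1 (n : ℕ) : (1 - Nmat n) * Mmat n = lam n • (1 + Nmat n) := by
  ext i j
  have hi := i.isLt; have hj := j.isLt
  rw [sub_mul, one_mul, Matrix.sub_apply, N_mul_apply, Matrix.smul_apply,
    Matrix.add_apply, Matrix.one_apply]
  simp only [Mmat, Nmat, Matrix.of_apply, Fin.val_mk, Fin.ext_iff, smul_eq_mul]
  split_ifs <;> first | omega | ring

lemma pent_pascal (n i j : ℕ) (hj : 1 ≤ j) (hjn : j ≤ n - 1) (hn : 1 ≤ n) :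
    2 * lam n * Pent n (i + 1) j = Pent n i (j - 1) - Pent n (i + 1) (j - 1) := by
  obtain ⟨j', rfl⟩ : ∃ j', j = j' + 1 := ⟨j - 1, by omega⟩
  simp only [Pent, Nat.add_sub_cancel]
  by_cases h1 : i + 1 ≤ j'
  · rw [if_pos (show i + 1 ≤ j' + 1 by omega), if_pos (show i ≤ j' by omega), if_pos h1]
    obtain ⟨d, rfl⟩ : ∃ d, j' = i + 1 + d := ⟨j' - i - 1, by omega⟩
    have e1 : i + 1 + d + 1 - (i + 1) = d + 1 := by omega
    have e2 : i + 1 + d - i = d + 1 := by omega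
    have e3 : i + 1 + d - (i + 1) = d := by omega
    have e4 : n - 1 - (i + 1 + d) = n - 1 - (i + 1 + d + 1) + 1 := by omega
    have hp : (i + 1 + d + 1).choose (i + 1) =
        (i + 1 + d).choose i + (i + 1 + d).choose (i + 1) :=
      Nat.choose_succ_succ' (i + 1 + d) i ▸ by rw [Nat.choose_succ_succ']
    rw [e1, e2, e3, e4, hp, pow_succ, pow_succ]
    push_cast
    ring
  · by_cases h2 : i ≤ j'
    · have hij : i = j' := by omega
      rw [if_pos (show i + 1 ≤ j' + 1 by omega), if_pos h2, if_neg h1]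
      subst hij
      have e1 : i + 1 - (i + 1) = 0 := by omega
      have e2 : i - i = 0 := by omega
      have e4 : n - 1 - i = n - 1 - (i + 1) + 1 := by omega
      rw [e1, e2, e4, Nat.choose_self, Nat.choose_self, pow_succ]
      push_cast
      ring
    · rw [if_neg (show ¬(i + 1 ≤ j' + 1) by omega), if_neg h2, if_neg (by omega)]
      ring

lemma key2 (n : ℕ) (hn : 1 ≤ n) :
    lam n • ((1 + Nmat n) * Pmat n) = (1 - Nmat n) * Qmat n := by
  ext i j
  have hi := i.isLt; have hj := j.isLt
  rw [add_mul, sub_mul, one_mul, one_mul, Matrix.smul_apply, Matrix.add_apply,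
    Matrix.sub_apply, N_mul_apply, N_mul_apply, smul_eq_mul]
  by_cases h : (i : ℕ) + 1 < n
  · rw [dif_pos h, dif_pos h]
    simp only [Pmat, Qmat, Matrix.of_apply, Fin.val_mk]
    by_cases hj1 : 1 ≤ (j : ℕ)
    · rw [if_pos hj1, if_pos hj1]
      have hp := pent_pascal n (i : ℕ) (j : ℕ) hj1 (by omega) hn
      linear_combination hp
    · rw [if_neg hj1, if_neg hj1]
      have h0 : Pent n ((i : ℕ) + 1) (j : ℕ) = 0 := by
        rw [Pent, if_neg (by omega)]
      rw [h0]
      ring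
  · rw [dif_neg h, dif_neg h]
    simp only [Pmat, Qmat, Matrix.of_apply]
    by_cases hj1 : 1 ≤ (j : ℕ)
    · rw [if_pos hj1]
      have h0 : Pent n (i : ℕ) ((j : ℕ) - 1) = 0 := by
        rw [Pent, if_neg (by omega)]
      rw [h0]
      ring
    · rw [if_neg hj1]
      ring

lemma isUnit_one_sub_N (n : ℕ) : IsUnit (1 - Nmat n).det := by
  have h : (1 - Nmat n).det = 1 := by
    rw [Matrix.det_of_upperTriangular (by
      intro i j hij
      have hij' : (j : ℕ) < (i : ℕ) := hij
      simp only [Matrix.sub_apply, Matrix.one_apply, Nmat, Matrix.of_apply]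
      rw [if_neg (show ¬(i = j) from fun hh => by rw [hh] at hij'; omega),
        if_neg (by omega), sub_zero])]
    apply Finset.prod_eq_one
    intro i _
    simp only [Matrix.sub_apply, Matrix.one_apply_eq, Nmat, Matrix.of_apply]
    rw [if_neg (by omega), sub_zero]
  rw [h]
  exact isUnit_one

lemma M_mul_P (n : ℕ) (hn : 1 ≤ n) :
    Mmat n * Pmat n = Pmat n * jordanBlock n (lam n) := by
  have h3 : (1 - Nmat n) * (Mmat n * Pmat n)
      = (1 - Nmat n) * (Pmat n * jordanBlock n (lam n)) := by
    rw [← mul_assoc, key1 n, Matrix.smul_mul, key2 n hn, P_mul_J]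
  have hu := isUnit_one_sub_N n
  have h4 := congrArg (fun X => (1 - Nmat n)⁻¹ * X) h3
  simpa [← mul_assoc, Matrix.nonsing_inv_mul _ hu] using h4

lemma isUnit_P_det (n : ℕ) : IsUnit (Pmat n).det := by
  rw [Matrix.det_of_upperTriangular (by
    intro i j hij
    have hij' : (j : ℕ) < (i : ℕ) := hij
    show Pent n (i : ℕ) (j : ℕ) = 0
    rw [Pent, if_neg (by omega)])]
  rw [isUnit_iff_ne_zero]
  apply Finset.prod_ne_zero_iff.mpr
  intro i _
  show Pent n (i : ℕ) (i : ℕ) ≠ 0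
  rw [Pent, if_pos le_rfl, Nat.sub_self, Nat.choose_self]
  simp only [pow_zero, Nat.cast_one, mul_one]
  exact pow_ne_zero _ (by simpa [lam] using (by norm_num : (2 : ℂ) ≠ 0))

end

end GammaAux

open GammaAux in
/-- For every `n ≥ 1`, the matrix `Γ_n` is nonsingular and
`Γ_n⁻ᵀ Γ_n` is similar to the Jordan block `J_n((-1)^(n+1))`. -/
theorem gamma_cosquare_similar_jordan (n : ℕ) (hn : 1 ≤ n) :
    IsUnit (Gamma n).det ∧
    ∃ P : Matrix (Fin n) (Fin n) ℂ, IsUnit P.det ∧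
      P⁻¹ * (((Gamma n)ᵀ)⁻¹ * Gamma n) * P = jordanBlock n ((-1 : ℂ) ^ (n + 1)) := by
  have hGC := gamma_mul_C n hn
  have hdet : IsUnit (Gamma n).det := by
    have h := congrArg Matrix.det hGC
    rw [Matrix.det_mul, Matrix.det_one] at h
    exact IsUnit.of_mul_eq_one _ h
  refine ⟨hdet, Pmat n, isUnit_P_det n, ?_⟩
  have hCG : Cmat n * Gamma n = 1 := mul_eq_one_comm.mp hGC
  have hinv : ((Gamma n)ᵀ)⁻¹ = (Cmat n)ᵀ := by
    apply Matrix.inv_eq_right_inv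
    rw [← Matrix.transpose_mul, hCG, Matrix.transpose_one]
  have hlam : lam n = (-1 : ℂ) ^ (n + 1) := rfl
  rw [hinv, CT_mul_gamma n hn, ← hlam, mul_assoc, M_mul_P n hn, ← mul_assoc,
    Matrix.nonsing_inv_mul _ (isUnit_P_det n), one_mul]
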